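/- The condition f(0) > 0, where f(I1) = N − I1 − φ(I1) − εψ(I1) − Nγ1/β1, is equivalent to the inequality (β1/γ1)·(γ2+σ2)⁻¹·((1−ε)β2 + εγ2 + σ2) > β2/γ2, i.e., R12 > 1 where R12 = (R1/R2)·((1−ε)β2 + εγ2 + σ2)/(γ2+σ2). -/

import Mathlib

theorem f_zero_pos_iff_R12_gt_one
    (N β1 β2 γ1 γ2 σ2 ε : ℝ)
    (hN : 0 < N) (hβ1 : 0 < β1) (hβ2 : 0 < β2) (hγ1 : 0 < γ1) (hγ2 : 0 < γ2)
    (hσ2 : 0 < σ2) (hβ2γ2 : β2 > γ2) (hε0 : 0 ≤ ε) (hε1 : ε ≤ 1)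
    (φ ψ f : ℝ → ℝ)
    (hφ : ∀ I1, φ I1 = (N * (β2 - γ2) - β2 * I1) * (β1 * (1 - ε) * I1 + N * σ2) /
          (β2 * (β1 * (1 - ε) * I1 + N * (γ2 + σ2))))
    (hψ : ∀ I1, ψ I1 = N * γ2 * (N * (β2 - γ2) - β2 * I1) /
          (β2 * (β1 * (1 - ε) * I1 + N * (γ2 + σ2))))
    (hf : ∀ I1, f I1 = N - I1 - φ I1 - ε * ψ I1 - N * γ1 / β1) :
    0 < f 0 ↔ 1 < ((β1 / γ1) / (β2 / γ2)) * (((1 - ε) * β2 + ε * γ2 + σ2) / (γ2 + σ2)) := by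
  have hγσ : 0 < γ2 + σ2 := by linarith
  rw [hf 0, hφ 0, hψ 0]
  have h1 : β2 ≠ 0 := hβ2.ne'
  have h2 : (γ2 + σ2) ≠ 0 := hγσ.ne'
  have hN' : N ≠ 0 := hN.ne'
  field_simp
  rw [lt_div_iff₀ (by nlinarith [mul_pos hN hγσ])]
  constructor <;> intro h <;> nlinarith [mul_pos hN hN, sq_nonneg N]
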